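/- arXiv:1704.04215 — 4 statements merged into one kernel-verified Lean document; each statement's English description precedes it below -/
import Mathlib

section
/- Let x = (N_{f_{v+1}} → X₁^{f₁}…X_d^{f_d} • X_{d+1}^{f_{d+1}}…X_v^{f_v}, i, j, ρ) be a parameterized item with the dot before position d+1 (so v ≥ d+1) and ρ ∈ ⟨f₁,…,f_{d+1}⟩. Then for every γ ∈ Φ there exists an ordinary item x' ∈ ⟦x⟧ of the form (N^{ρ₀}_β → X^{ρ₁}_{ρ₂}…X^{ρ_{2d−1}}_{ρ_{2d}} • X^{ρ_{2d+1}}_γ w, i, j) for some β ∈ Φ and some string w of induced symbols. -/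
/-- Hull membership: `ρ` has length `2*u` and for each `i < u`, the partial function
`f i` (modeling `f_{i+1} : Φ^(2i+1) ⇀ Φ`) is defined at the first `2i+1` entries of `ρ`
with value `ρ_{2i+1}`. -/
def InHull {Φ : Type} (f : ℕ → List Φ → Option Φ) (u : ℕ) (ρ : List Φ) : Prop :=
  ρ.length = 2 * u ∧ ∀ i < u, ρ[2 * i + 1]? = f i (ρ.take (2 * i + 1))

/-- A parameterized rule `N_{f_{k+1}} → X₁^{f₁} … X_k^{f_k}`; symbols are nonterminals
(`Sum.inl`) or terminals (`Sum.inr`), and `f i` models the partial function `f_{i+1}`. -/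
structure ParamRule (NT TM Φ : Type) where
  lhs : NT
  rhs : List (NT ⊕ TM)
  f : ℕ → List Φ → Option Φ

/-- A rule of the induced (ordinary) grammar: `lhs^inP_outP → rhs [⊥]`, where the
trailing failure symbol `⊥` is recorded by the flag `fail`, and `isTop` marks the
special rules `⊤ → S^{φstart}_β` of the induced grammar. -/
structure IndRule (NT TM Φ : Type) where
  isTop : Bool
  lhs : NT
  inP : Φ
  outP : Φ
  rhs : List ((NT ⊕ TM) × Φ × Φ)
  fail : Bool

/-- `q` is one of the rules induced by the parameterized rule `r`. -/
def InducedBy {NT TM Φ : Type} (r : ParamRule NT TM Φ) (q : IndRule NT TM Φ) : Prop :=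
  q.isTop = false ∧ q.lhs = r.lhs ∧
  ((q.fail = false ∧ q.rhs.length = r.rhs.length ∧
      ∃ ρ : List Φ, InHull r.f (r.rhs.length + 1) ρ ∧
        ρ[0]? = some q.inP ∧ ρ[2 * r.rhs.length + 1]? = some q.outP ∧
        ∀ i < r.rhs.length, ∃ X a b,
          r.rhs[i]? = some X ∧ ρ[2 * i + 1]? = some a ∧
          ρ[2 * i + 2]? = some b ∧ q.rhs[i]? = some (X, a, b)) ∨
   (q.fail = true ∧ ∃ h, 1 ≤ h ∧ h ≤ r.rhs.length ∧ q.rhs.length = h ∧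
      ∃ ρ : List Φ, InHull r.f h ρ ∧ ρ[0]? = some q.inP ∧
        (∀ i, i + 1 < h → ∃ X a b,
          r.rhs[i]? = some X ∧ ρ[2 * i + 1]? = some a ∧
          ρ[2 * i + 2]? = some b ∧ q.rhs[i]? = some (X, a, b)) ∧
        ∃ X a βh, r.rhs[h - 1]? = some X ∧ ρ[2 * h - 1]? = some a ∧
          q.rhs[h - 1]? = some (X, a, βh) ∧ r.f h (ρ ++ [βh]) = none))

/-- A parameterized (PELLA) item `(r, d, i, j, ρ)`. -/
structure PItem (NT TM Φ : Type) where
  r : ParamRule NT TM Φ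
  d : ℕ
  i : ℕ
  j : ℕ
  ρ : List Φ

/-- An ordinary (ELLA) Earley item `(q, d, i, j)` of the induced grammar. -/
structure EItem (NT TM Φ : Type) where
  rule : IndRule NT TM Φ
  d : ℕ
  i : ℕ
  j : ℕ

/-- The invariant demanded of parameterized items: `d ≤ k` and `ρ ∈ ⟨f₁,…,f_{d+1}⟩`. -/
def PItem.Valid {NT TM Φ : Type} (x : PItem NT TM Φ) : Prop :=
  x.d ≤ x.r.rhs.length ∧ InHull x.r.f (x.d + 1) x.ρ

/-- `ρ` is the length-`2*(d+1)` prefix of the parameter sequence of the induced rule `q`. -/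
def ParamsMatch {NT TM Φ : Type} (q : IndRule NT TM Φ) (d : ℕ) (ρ : List Φ) : Prop :=
  ρ.length = 2 * (d + 1) ∧ ρ[0]? = some q.inP ∧
  (∀ i < d, ∃ X a b, q.rhs[i]? = some (X, a, b) ∧
      ρ[2 * i + 1]? = some a ∧ ρ[2 * i + 2]? = some b) ∧
  ((∃ X a b, q.rhs[d]? = some (X, a, b) ∧ ρ[2 * d + 1]? = some a) ∨
   (d = q.rhs.length ∧ q.fail = false ∧ ρ[2 * d + 1]? = some q.outP))

/-- The ordinary item `y` belongs to the induced item set `⟦x⟧` of the parameterized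
item `x`. -/
def MemInduced {NT TM Φ : Type} (x : PItem NT TM Φ) (y : EItem NT TM Φ) : Prop :=
  InducedBy x.r y.rule ∧ y.d = x.d ∧ y.i = x.i ∧ y.j = x.j ∧
  (y.rule.fail = true → x.d + 1 ≤ y.rule.rhs.length) ∧
  ParamsMatch y.rule x.d x.ρ

section Helpers

lemma get?_ofFn_eq {α : Type*} {n : ℕ} (f : Fin n → α) (i : ℕ) (h : i < n) :
    (List.ofFn f)[i]? = some (f ⟨i, h⟩) := by
  rw [List.getElem?_eq_getElem (by simpa using h)]; simp

lemma prefix_get? {α : Type*} {l l' : List α} (h : l <+: l') {n : ℕ} (hn : n < l.length) :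
    l'[n]? = l[n]? := by
  obtain ⟨t, rfl⟩ := h
  exact List.getElem?_append_left hn

lemma InHull.extend {Φ : Type} {f : ℕ → List Φ → Option Φ} {u : ℕ} {ρ : List Φ}
    (h : InHull f u ρ) (β a : Φ) (ha : f u (ρ ++ [β]) = some a) :
    InHull f (u + 1) (ρ ++ [β, a]) := by
  obtain ⟨hlen, hval⟩ := h
  constructor
  · simp [hlen]; ring
  · intro i hi
    rcases Nat.lt_succ_iff_lt_or_eq.mp hi with hi' | heq
    · have h1 : 2 * i + 1 < ρ.length := by omega
      rw [List.getElem?_append_left h1, List.take_append_of_le_length (by omega)]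
      exact hval i hi'
    · subst heq
      have h2 : (ρ ++ [β, a])[2 * i + 1]? = some a := by
        rw [List.getElem?_append_right (by omega)]
        have : 2 * i + 1 - ρ.length = 1 := by omega
        rw [this]
        rfl
      rw [h2]
      have h3 : (ρ ++ [β, a]).take (2 * i + 1) = ρ ++ [β] := by
        rw [List.take_append, List.take_of_length_le (by omega)]
        congr 1
        have : 2 * i + 1 - ρ.length = 1 := by omega
        simp [this]
      rw [h3, ha]

lemma extend_or_fail {Φ : Type} [Nonempty Φ] (f : ℕ → List Φ → Option Φ) (k : ℕ) :
    ∀ m u ρ, u + m = k + 1 → 1 ≤ u → InHull f u ρ →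
      (∃ ρ', InHull f (k + 1) ρ' ∧ ρ <+: ρ') ∨
      (∃ h ρ' β, u ≤ h ∧ h ≤ k ∧ InHull f h ρ' ∧ ρ <+: ρ' ∧ f h (ρ' ++ [β]) = none) := by
  intro m
  induction m with
  | zero =>
    intro u ρ hm _ hh
    obtain rfl : u = k + 1 := by omega
    exact Or.inl ⟨ρ, hh, List.prefix_refl ρ⟩
  | succ m ih =>
    intro u ρ hm hu hh
    have hβ : Nonempty Φ := inferInstance
    obtain ⟨β⟩ := hβ
    cases ha : f u (ρ ++ [β]) with
    | none => exact Or.inr ⟨u, ρ, β, le_refl u, by omega, hh, List.prefix_refl ρ, ha⟩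
    | some a =>
      have hh' := hh.extend β a ha
      have hpre : ρ <+: ρ ++ [β, a] := List.prefix_append ρ _
      rcases ih (u + 1) (ρ ++ [β, a]) (by omega) (by omega) hh' with ⟨ρ', h1, h2⟩ | ⟨h, ρ', β', h1, h2, h3, h4, h5⟩
      · exact Or.inl ⟨ρ', h1, hpre.trans h2⟩
      · exact Or.inr ⟨h, ρ', β', by omega, h2, h3, hpre.trans h4, h5⟩

end Helpers


/-- Rhs of an induced rule: triples `(X_i, ρ_{2i+1}, ρ_{2i+2})` for `i < dcut`,
with out-parameter `γ` at positions `≥ dcut`. -/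
def mkTriples {NT TM Φ : Type} (rhs : List (NT ⊕ TM)) (ρ : List Φ) (X0 : NT ⊕ TM) (φ0 : Φ)
    (dcut : ℕ) (γ : Φ) (n : ℕ) : List ((NT ⊕ TM) × Φ × Φ) :=
  List.ofFn (fun i : Fin n =>
    ((rhs[(i : ℕ)]?).getD X0, (ρ[2 * (i : ℕ) + 1]?).getD φ0,
      if (i : ℕ) < dcut then (ρ[2 * (i : ℕ) + 2]?).getD φ0 else γ))

lemma mkTriples_length {NT TM Φ : Type} (rhs : List (NT ⊕ TM)) (ρ : List Φ) (X0 : NT ⊕ TM)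
    (φ0 : Φ) (dcut : ℕ) (γ : Φ) (n : ℕ) :
    (mkTriples rhs ρ X0 φ0 dcut γ n).length = n := by
  simp [mkTriples]

lemma mkTriples_get? {NT TM Φ : Type} (rhs : List (NT ⊕ TM)) (ρ : List Φ) (X0 : NT ⊕ TM)
    (φ0 : Φ) (dcut : ℕ) (γ : Φ) (n : ℕ) (i : ℕ) (hi : i < n) :
    (mkTriples rhs ρ X0 φ0 dcut γ n)[i]? =
      some ((rhs[i]?).getD X0, (ρ[2 * i + 1]?).getD φ0,
        if i < dcut then (ρ[2 * i + 2]?).getD φ0 else γ) := by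
  unfold mkTriples
  rw [get?_ofFn_eq _ i hi]

lemma get?_eq_some_getD {α : Type*} (l : List α) (n : ℕ) (h : n < l.length) (dflt : α) :
    l[n]? = some ((l[n]?).getD dflt) := by
  rw [List.getElem?_eq_getElem h]; rfl

/-- If the dot of the parameterized item `x` is before position `d+1`
(so `v ≥ d + 1`), then for every `γ ∈ Φ` there is an induced item `x' ∈ ⟦x⟧` whose
symbol after the dot is `X^{ρ_{2d+1}}_γ`. -/
theorem choose_induced_item {NT TM Φ : Type} [Nonempty Φ]
    (x : PItem NT TM Φ) (hx : x.Valid) (hdot : x.d + 1 ≤ x.r.rhs.length) (γ : Φ) :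
    ∃ y : EItem NT TM Φ, MemInduced x y ∧
      ∃ X a, x.r.rhs[x.d]? = some X ∧ x.ρ[2 * x.d + 1]? = some a ∧
        y.rule.rhs[x.d]? = some (X, a, γ) := by
    classical
  obtain ⟨φ0⟩ := (inferInstance : Nonempty Φ)
  have hx2 := hx
  unfold PItem.Valid InHull at hx2
  obtain ⟨hdk, hlen, hval⟩ := hx2
  have hdlt : x.d < x.r.rhs.length := hdot
  have hX : x.r.rhs[x.d]? = some (x.r.rhs.get ⟨x.d, hdlt⟩) := List.getElem?_eq_getElem hdlt
  set X0 := x.r.rhs.get ⟨x.d, hdlt⟩ with hX0def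
  have haidx : 2 * x.d + 1 < x.ρ.length := by omega
  have ha : x.ρ[2 * x.d + 1]? = some (x.ρ.get ⟨2 * x.d + 1, haidx⟩) :=
    List.getElem?_eq_getElem haidx
  set a0 := x.ρ.get ⟨2 * x.d + 1, haidx⟩ with ha0def
  have h0idx : 0 < x.ρ.length := by omega
  have hin : x.ρ[0]? = some (x.ρ.get ⟨0, h0idx⟩) := List.getElem?_eq_getElem h0idx
  set p0 := x.ρ.get ⟨0, h0idx⟩ with hp0def
  cases hstep : x.r.f (x.d + 1) (x.ρ ++ [γ]) with
  | none =>
    -- failure already at step d+1 : take the ⊥-rule with h = d + 1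
    refine ⟨⟨⟨false, x.r.lhs, p0, γ,
        mkTriples x.r.rhs x.ρ X0 φ0 x.d γ (x.d + 1), true⟩, x.d, x.i, x.j⟩, ?_, ?_⟩
    · unfold MemInduced InducedBy ParamsMatch
      refine ⟨⟨rfl, rfl, Or.inr ⟨rfl, x.d + 1, by omega, hdot,
          mkTriples_length x.r.rhs x.ρ X0 φ0 x.d γ (x.d + 1), x.ρ, ⟨hlen, hval⟩, hin, ?_, ?_⟩⟩,
          rfl, rfl, rfl, ?_, hlen, hin, ?_, Or.inl ?_⟩
      · intro i hi
        have hi' : i < x.d := by omega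
        refine ⟨(x.r.rhs[i]?).getD X0, (x.ρ[2 * i + 1]?).getD φ0,
            (x.ρ[2 * i + 2]?).getD φ0,
            get?_eq_some_getD _ _ (by omega) _,
            get?_eq_some_getD _ _ (by omega) _,
            get?_eq_some_getD _ _ (by omega) _, ?_⟩
        rw [mkTriples_get? _ _ _ _ _ _ _ i (by omega), if_pos hi']
      · refine ⟨X0, a0, γ, by simpa using hX, ?_, ?_, hstep⟩
        · rw [show 2 * (x.d + 1) - 1 = 2 * x.d + 1 by omega]; exact ha
        · rw [show x.d + 1 - 1 = x.d by omega,
            mkTriples_get? _ _ _ _ _ _ _ x.d (by omega), if_neg (lt_irrefl x.d)]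
          rw [hX, ha]; rfl
      · intro _
        rw [mkTriples_length]
      · intro i hi
        have hi' : i < x.d := hi
        refine ⟨(x.r.rhs[i]?).getD X0, (x.ρ[2 * i + 1]?).getD φ0,
            (x.ρ[2 * i + 2]?).getD φ0, ?_,
            get?_eq_some_getD _ _ (by omega) _,
            get?_eq_some_getD _ _ (by omega) _⟩
        rw [mkTriples_get? _ _ _ _ _ _ _ i (by omega), if_pos hi']
      · refine ⟨X0, a0, γ, ?_, ha⟩
        rw [mkTriples_get? _ _ _ _ _ _ _ x.d (by omega), if_neg (lt_irrefl x.d)]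
        rw [hX, ha]; rfl
    · refine ⟨X0, a0, hX, ha, ?_⟩
      rw [mkTriples_get? _ _ _ _ _ _ _ x.d (by omega), if_neg (lt_irrefl x.d)]
      rw [hX, ha]; rfl
  | some a1 =>
    -- we can take one more step, appending γ and a1
    have hh1 : InHull x.r.f (x.d + 1 + 1) (x.ρ ++ [γ, a1]) :=
      InHull.extend ⟨hlen, hval⟩ γ a1 hstep
    have hmid : (x.ρ ++ [γ, a1])[2 * x.d + 2]? = some γ := by
      rw [List.getElem?_append_right (by omega), hlen,
        show 2 * x.d + 2 - 2 * (x.d + 1) = 0 from by omega]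
      rfl
    rcases extend_or_fail x.r.f x.r.rhs.length (x.r.rhs.length + 1 - (x.d + 2)) (x.d + 2)
        (x.ρ ++ [γ, a1]) (by omega) (by omega) hh1 with
      ⟨ρ', hρ', hpre⟩ | ⟨h, ρ', β', hh1', hh2, hρ', hpre, hfail⟩
    · -- full hull: non-failure induced rule
      have hplen : ρ'.length = 2 * (x.r.rhs.length + 1) := hρ'.1
      have hpx : x.ρ <+: ρ' := (List.prefix_append _ _).trans hpre
      have hag : ∀ n < 2 * (x.d + 1), ρ'[n]? = x.ρ[n]? := by
        intro n hn
        exact prefix_get? hpx (by omega)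
      have hγ : ρ'[2 * x.d + 2]? = some γ := by
        rw [prefix_get? hpre (by simp [hlen])]
        exact hmid
      refine ⟨⟨⟨false, x.r.lhs, p0, (ρ'[2 * x.r.rhs.length + 1]?).getD φ0,
          mkTriples x.r.rhs ρ' X0 φ0 x.r.rhs.length γ x.r.rhs.length, false⟩,
          x.d, x.i, x.j⟩, ?_, ?_⟩
      · unfold MemInduced InducedBy ParamsMatch
        refine ⟨⟨rfl, rfl, Or.inl ⟨rfl, mkTriples_length x.r.rhs ρ' X0 φ0 x.r.rhs.length γ x.r.rhs.length, ρ', hρ',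
            by rw [hag 0 (by omega)]; exact hin,
            get?_eq_some_getD _ _ (by omega) _, ?_⟩⟩,
            rfl, rfl, rfl, ?_, hlen, hin, ?_, Or.inl ?_⟩
        · intro i hi
          refine ⟨(x.r.rhs[i]?).getD X0, (ρ'[2 * i + 1]?).getD φ0,
              (ρ'[2 * i + 2]?).getD φ0,
              get?_eq_some_getD _ _ (by omega) _,
              get?_eq_some_getD _ _ (by omega) _,
              get?_eq_some_getD _ _ (by omega) _, ?_⟩
          rw [mkTriples_get? _ _ _ _ _ _ _ i (by omega), if_pos hi]
        · intro hc
          exact Bool.noConfusion hc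
        · intro i hi
          refine ⟨(x.r.rhs[i]?).getD X0, (ρ'[2 * i + 1]?).getD φ0,
              (ρ'[2 * i + 2]?).getD φ0, ?_, ?_, ?_⟩
          · rw [mkTriples_get? _ _ _ _ _ _ _ i (by omega), if_pos (show i < x.r.rhs.length by omega)]
          · rw [← hag (2 * i + 1) (by omega)]
            exact get?_eq_some_getD _ _ (by omega) _
          · rw [← hag (2 * i + 2) (by omega)]
            exact get?_eq_some_getD _ _ (by omega) _
        · refine ⟨(x.r.rhs[x.d]?).getD X0, (ρ'[2 * x.d + 1]?).getD φ0,
              (ρ'[2 * x.d + 2]?).getD φ0, ?_, ?_⟩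
          · rw [mkTriples_get? _ _ _ _ _ _ _ x.d (by omega), if_pos hdlt]
          · rw [← hag (2 * x.d + 1) (by omega)]
            exact get?_eq_some_getD _ _ (by omega) _
      · refine ⟨(x.r.rhs[x.d]?).getD X0, (ρ'[2 * x.d + 1]?).getD φ0,
            get?_eq_some_getD _ _ (by omega) _, ?_, ?_⟩
        · rw [← hag (2 * x.d + 1) (by omega)]
          exact get?_eq_some_getD _ _ (by omega) _
        · rw [mkTriples_get? _ _ _ _ _ _ _ x.d (by omega), if_pos hdlt, hγ]
          rfl
    · -- failure at some later step h, with d + 2 ≤ h ≤ k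
      have hplen : ρ'.length = 2 * h := hρ'.1
      have hpx : x.ρ <+: ρ' := (List.prefix_append _ _).trans hpre
      have hag : ∀ n < 2 * (x.d + 1), ρ'[n]? = x.ρ[n]? := by
        intro n hn
        exact prefix_get? hpx (by omega)
      have hγ : ρ'[2 * x.d + 2]? = some γ := by
        rw [prefix_get? hpre (by simp [hlen])]
        exact hmid
      refine ⟨⟨⟨false, x.r.lhs, p0, γ,
          mkTriples x.r.rhs ρ' X0 φ0 (h - 1) β' h, true⟩, x.d, x.i, x.j⟩, ?_, ?_⟩
      · unfold MemInduced InducedBy ParamsMatch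
        refine ⟨⟨rfl, rfl, Or.inr ⟨rfl, h, by omega, hh2,
            mkTriples_length x.r.rhs ρ' X0 φ0 (h - 1) β' h, ρ', hρ',
            by rw [hag 0 (by omega)]; exact hin, ?_, ?_⟩⟩,
            rfl, rfl, rfl, ?_, hlen, hin, ?_, Or.inl ?_⟩
        · intro i hi
          refine ⟨(x.r.rhs[i]?).getD X0, (ρ'[2 * i + 1]?).getD φ0,
              (ρ'[2 * i + 2]?).getD φ0,
              get?_eq_some_getD _ _ (by omega) _,
              get?_eq_some_getD _ _ (by omega) _,
              get?_eq_some_getD _ _ (by omega) _, ?_⟩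
          rw [mkTriples_get? _ _ _ _ _ _ _ i (by omega), if_pos (show i < h - 1 by omega)]
        · refine ⟨(x.r.rhs[h - 1]?).getD X0, (ρ'[2 * (h - 1) + 1]?).getD φ0, β',
              get?_eq_some_getD _ _ (by omega) _, ?_, ?_, hfail⟩
          · rw [show 2 * h - 1 = 2 * (h - 1) + 1 by omega]
            exact get?_eq_some_getD _ _ (by omega) _
          · rw [mkTriples_get? _ _ _ _ _ _ _ (h - 1) (by omega),
              if_neg (lt_irrefl (h - 1))]
        · intro _
          rw [mkTriples_length]
          omega
        · intro i hi
          refine ⟨(x.r.rhs[i]?).getD X0, (ρ'[2 * i + 1]?).getD φ0,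
              (ρ'[2 * i + 2]?).getD φ0, ?_, ?_, ?_⟩
          · rw [mkTriples_get? _ _ _ _ _ _ _ i (by omega), if_pos (show i < h - 1 by omega)]
          · rw [← hag (2 * i + 1) (by omega)]
            exact get?_eq_some_getD _ _ (by omega) _
          · rw [← hag (2 * i + 2) (by omega)]
            exact get?_eq_some_getD _ _ (by omega) _
        · refine ⟨(x.r.rhs[x.d]?).getD X0, (ρ'[2 * x.d + 1]?).getD φ0,
              (ρ'[2 * x.d + 2]?).getD φ0, ?_, ?_⟩
          · rw [mkTriples_get? _ _ _ _ _ _ _ x.d (by omega), if_pos (show x.d < h - 1 by omega)]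
          · rw [← hag (2 * x.d + 1) (by omega)]
            exact get?_eq_some_getD _ _ (by omega) _
      · refine ⟨(x.r.rhs[x.d]?).getD X0, (ρ'[2 * x.d + 1]?).getD φ0,
            get?_eq_some_getD _ _ (by omega) _, ?_, ?_⟩
        · rw [← hag (2 * x.d + 1) (by omega)]
          exact get?_eq_some_getD _ _ (by omega) _
        · rw [mkTriples_get? _ _ _ _ _ _ _ x.d (by omega),
            if_pos (show x.d < h - 1 by omega), hγ]
          rfl
end

section
/- For every induced rule (N^α_β → w) ∈ ⟦R⟧ and every d with 0 ≤ d ≤ |w| (if w does not end with ⊥) or 0 ≤ d ≤ |w|−2 (if w ends with ⊥), and any indices 0 ≤ i ≤ j ≤ n, there exists a parameterized item x = (N_{f_{k+1}} → X₁^{f₁}…X_k^{f_k}, d, i, j, ρ) satisfying the hull invariant such that (N^α_β → w, d, i, j) ∈ ⟦x⟧. -/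
lemma inHull_take {Φ : Type} (f : ℕ → List Φ → Option Φ) {u v : ℕ} {ρ : List Φ}
    (h : InHull f u ρ) (hv : v ≤ u) : InHull f v (ρ.take (2 * v)) := by
  obtain ⟨hlen, hf⟩ := h
  constructor
  · rw [List.length_take, hlen]; omega
  · intro i hi
    have h1 : 2 * i + 1 < 2 * v := by omega
    rw [List.getElem?_take_of_lt h1, List.take_take, min_eq_left (by omega : 2 * i + 1 ≤ 2 * v)]
    exact hf i (by omega)

/-- For every rule `q` induced by some parameterized rule of `R`, every
admissible dot position `d` (`d ≤ |w|` if `q` does not end in `⊥`, `d ≤ |w| - 2`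
otherwise, where `|w| = q.rhs.length` resp. `q.rhs.length + 1`), and any indices
`i ≤ j ≤ n`, there is a parameterized item `x` over a rule of `R` satisfying the hull
invariant with `(q, d, i, j) ∈ ⟦x⟧`. -/
theorem find_parameterized_item {NT TM Φ : Type}
    (R : Set (ParamRule NT TM Φ)) (q : IndRule NT TM Φ)
    (hq : ∃ r ∈ R, InducedBy r q)
    (d i j n : ℕ)
    (hd₁ : q.fail = false → d ≤ q.rhs.length)
    (hd₂ : q.fail = true → d + 1 ≤ q.rhs.length)
    (hij : i ≤ j) (hjn : j ≤ n) :
    ∃ x : PItem NT TM Φ, x.r ∈ R ∧ x.d = d ∧ x.i = i ∧ x.j = j ∧ x.Valid ∧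
      MemInduced x ⟨q, d, i, j⟩ := by
  obtain ⟨r, hR, hind⟩ := hq
  obtain ⟨htop, hlhs, hcase⟩ := hind
  rcases hcase with ⟨hfail, hlen, ρ, hhull, hin, hout, hall⟩ |
    ⟨hfail, h, h1, h2, hqlen, ρ, hhull, hin, hall, X, a, βh, hX, ha, hq, hnone⟩
  · -- non-failure case
    have hdk : d ≤ r.rhs.length := hlen ▸ hd₁ hfail
    refine ⟨⟨r, d, i, j, ρ.take (2 * (d + 1))⟩, hR, rfl, rfl, rfl,
      ⟨hdk, inHull_take r.f hhull (Nat.succ_le_succ hdk)⟩,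
      ⟨htop, hlhs, Or.inl ⟨hfail, hlen, ρ, hhull, hin, hout, hall⟩⟩, rfl, rfl, rfl,
      fun hf => by simp [hfail] at hf, ?_, ?_, ?_, ?_⟩
    · dsimp only; rw [List.length_take, hhull.1]; omega
    · dsimp only; rw [List.getElem?_take_of_lt (by omega : 0 < 2 * (d + 1))]; exact hin
    · dsimp only
      intro m hm
      obtain ⟨Y, a, b, _, h2, h3, h4⟩ := hall m (by omega)
      exact ⟨Y, a, b, h4, by rw [List.getElem?_take_of_lt (by omega)]; exact h2,
        by rw [List.getElem?_take_of_lt (by omega)]; exact h3⟩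
    · dsimp only
      rcases lt_or_eq_of_le hdk with hlt | heq
      · obtain ⟨Y, a, b, _, h2, _, h4⟩ := hall d hlt
        exact Or.inl ⟨Y, a, b, h4, by rw [List.getElem?_take_of_lt (by omega)]; exact h2⟩
      · refine Or.inr ⟨by omega, hfail, ?_⟩
        rw [List.getElem?_take_of_lt (by omega)]
        rw [heq]; exact hout
  · -- failure case
    have hdk : d + 1 ≤ q.rhs.length := hd₂ hfail
    have hdh : d + 1 ≤ h := by omega
    refine ⟨⟨r, d, i, j, ρ.take (2 * (d + 1))⟩, hR, rfl, rfl, rfl,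
      ⟨(by omega : d ≤ r.rhs.length), inHull_take r.f hhull hdh⟩,
      ⟨htop, hlhs, Or.inr ⟨hfail, h, h1, h2, hqlen, ρ, hhull, hin, hall, X, a, βh,
        hX, ha, hq, hnone⟩⟩, rfl, rfl, rfl, fun _ => hdk, ?_, ?_, ?_, ?_⟩
    · dsimp only; rw [List.length_take, hhull.1]; omega
    · dsimp only; rw [List.getElem?_take_of_lt (by omega : 0 < 2 * (d + 1))]; exact hin
    · dsimp only
      intro m hm
      obtain ⟨Y, a', b, _, h2', h3, h4⟩ := hall m (by omega)
      exact ⟨Y, a', b, h4, by rw [List.getElem?_take_of_lt (by omega)]; exact h2',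
        by rw [List.getElem?_take_of_lt (by omega)]; exact h3⟩
    · dsimp only
      rcases lt_or_eq_of_le hdh with hlt | heq
      · obtain ⟨Y, a', b, _, h2', _, h4⟩ := hall d (by omega)
        exact Or.inl ⟨Y, a', b, h4, by rw [List.getElem?_take_of_lt (by omega)]; exact h2'⟩
      · refine Or.inl ⟨X, a, βh, ?_, ?_⟩
        · rw [show d = h - 1 by omega]; exact hq
        · rw [List.getElem?_take_of_lt (by omega)]
          rw [show 2 * d + 1 = 2 * h - 1 by omega]; exact ha
end

section
/- If I ∼ I' then Complete k I ∼ Complete' k I', where Complete advances the dot of an item over a nonterminal M when a completed item for M with matching input parameter is present, records M's output parameter, and requires the next partial function to be defined on the extended parameter sequence; Complete' is the standard Earley completion on the induced grammar. -/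
/-- `⟦I⟧`, the induced item set of a set of parameterized items. -/
def InducedSet {NT TM Φ : Type} (I : Set (PItem NT TM Φ)) : Set (EItem NT TM Φ) :=
  { y | ∃ x ∈ I, MemInduced x y }

/-- `NormItems` removes items whose left-hand side is `⊤` or whose dot is immediately
before `⊥`. -/
def NormItems {NT TM Φ : Type} (I' : Set (EItem NT TM Φ)) : Set (EItem NT TM Φ) :=
  { y ∈ I' | y.rule.isTop = false ∧ ¬(y.rule.fail = true ∧ y.d = y.rule.rhs.length) }

/-- The correspondence `I ∼ I'`, namely `⟦I⟧ = Norm(I')`. -/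
def Sim {NT TM Φ : Type} (I : Set (PItem NT TM Φ)) (I' : Set (EItem NT TM Φ)) : Prop :=
  InducedSet I = NormItems I'

/-- PELLA completion at position `k`. -/
def Complete {NT TM Φ : Type} (k : ℕ) (I : Set (PItem NT TM Φ)) :
    Set (PItem NT TM Φ) :=
  I ∪ { z | ∃ x ∈ I, ∃ y ∈ I, ∃ M : NT,
      x.r.rhs[x.d]? = some (Sum.inl M) ∧ y.r.lhs = M ∧
      y.d = y.r.rhs.length ∧ y.i = x.j ∧ y.j = k ∧
      x.ρ[2 * x.d + 1]? = y.ρ[0]? ∧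
      ∃ ξout b : Φ, y.ρ[2 * y.d + 1]? = some ξout ∧
        x.r.f (x.d + 1) (x.ρ ++ [ξout]) = some b ∧
        z = ⟨x.r, x.d + 1, x.i, k, (x.ρ ++ [ξout]) ++ [b]⟩ }

/-- Standard Earley completion at position `k` on the induced grammar. -/
def Complete' {NT TM Φ : Type} (k : ℕ) (I' : Set (EItem NT TM Φ)) :
    Set (EItem NT TM Φ) :=
  I' ∪ { z | ∃ y ∈ I', ∃ c ∈ I', ∃ (M : NT) (α β : Φ),
      y.rule.rhs[y.d]? = some (Sum.inl M, α, β) ∧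
      c.rule.isTop = false ∧ c.rule.fail = false ∧ c.rule.lhs = M ∧
      c.rule.inP = α ∧ c.rule.outP = β ∧ c.d = c.rule.rhs.length ∧
      c.i = y.j ∧ c.j = k ∧ z = ⟨y.rule, y.d + 1, y.i, k⟩ }


private lemma lt_of_get?_some {α : Type} {l : List α} {n : ℕ} {a : α}
    (h : l[n]? = some a) : n < l.length := by
  by_contra hn
  rw [List.getElem?_eq_none_iff.mpr (by omega)] at h
  cases h

private lemma get?_app1 {α : Type} (l l2 : List α) {n : ℕ} (h : n < l.length) :
    (l ++ l2)[n]? = l[n]? := List.getElem?_append_left h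

private lemma get?_app2 {α : Type} (l : List α) (s : α) :
    (l ++ [s])[l.length]? = some s := List.getElem?_concat_length

private lemma take_eq_of_get? {α : Type} (l l2 : List α) (m : ℕ) (hl2 : l2.length = m)
    (h : ∀ n < m, l[n]? = l2[n]?) : l.take m = l2 := by
  apply List.ext_getElem?
  intro n
  by_cases hn : n < m
  · have := h n hn
    simp only [List.getElem?_take] at this ⊢
    rw [if_pos hn]
    exact this
  · rw [List.getElem?_eq_none_iff.mpr (by simp [List.length_take]; omega),
        List.getElem?_eq_none_iff.mpr (by omega)]

private lemma get?_eq_of_entries {Φ : Type} (ρ1 ρ2 : List Φ) (d : ℕ)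
    (h0 : ρ1[0]? = ρ2[0]?)
    (hodd : ∀ i ≤ d, ρ1[2*i+1]? = ρ2[2*i+1]?)
    (heven : ∀ i < d, ρ1[2*i+2]? = ρ2[2*i+2]?) :
    ∀ n < 2*d+2, ρ1[n]? = ρ2[n]? := by
  intro n hn
  rcases Nat.even_or_odd n with ⟨m, hm⟩ | ⟨m, hm⟩
  · rcases m with _ | i
    · subst hm; exact h0
    · have h2 : n = 2*i+2 := by omega
      rw [h2]; exact heven i (by omega)
  · have h2 : n = 2*m+1 := by omega
    rw [h2]; exact hodd m (by omega)

private lemma induced_rhs_sym {NT TM Φ : Type} {r : ParamRule NT TM Φ} {q : IndRule NT TM Φ}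
    (h : InducedBy r q) {i : ℕ} {X : NT ⊕ TM} {a b : Φ}
    (hq : q.rhs[i]? = some (X, a, b)) : r.rhs[i]? = some X := by
  have hi : i < q.rhs.length := lt_of_get?_some hq
  rcases h.2.2 with ⟨_, hlen, ρ, _, _, _, hent⟩ |
    ⟨_, hh, _, hhr, hqlen, ρ, _, _, hent, X1, a1, βh, hrh, _, hqh, _⟩
  · obtain ⟨X', a', b', hr', _, _, hq'⟩ := hent i (by omega)
    rw [hq] at hq'
    simp only [Option.some.injEq, Prod.mk.injEq] at hq'
    rw [hr', hq'.1]
  · by_cases hih : i + 1 < hh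
    · obtain ⟨X', a', b', hr', _, _, hq'⟩ := hent i hih
      rw [hq] at hq'
      simp only [Option.some.injEq, Prod.mk.injEq] at hq'
      rw [hr', hq'.1]
    · have : i = hh - 1 := by omega
      subst this
      rw [hq] at hqh
      simp only [Option.some.injEq, Prod.mk.injEq] at hqh
      rw [hrh, hqh.1]

private lemma paramsMatch_prefix {NT TM Φ : Type} {q : IndRule NT TM Φ} {d : ℕ}
    {ρ : List Φ} {s t : Φ} (hlen : ρ.length = 2*(d+1))
    (h : ParamsMatch q (d+1) (ρ ++ [s] ++ [t])) : ParamsMatch q d ρ := by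
  obtain ⟨_, hin, hall, _⟩ := h
  have hpre : ∀ n < 2*d+2, (ρ ++ [s] ++ [t])[n]? = ρ[n]? := by
    intro n hn
    rw [get?_app1 _ _ (by simp [hlen]; omega), get?_app1 _ _ (by omega)]
  refine ⟨hlen, ?_, ?_, ?_⟩
  · rw [← hpre 0 (by omega)]; exact hin
  · intro i hi
    obtain ⟨X, a, b, hq, ha, hb⟩ := hall i (by omega)
    exact ⟨X, a, b, hq, by rw [← hpre _ (by omega)]; exact ha,
      by rw [← hpre _ (by omega)]; exact hb⟩
  · obtain ⟨X, a, b, hq, ha, hb⟩ := hall d (by omega)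
    exact Or.inl ⟨X, a, b, hq, by rw [← hpre _ (by omega)]; exact ha⟩

private lemma complete_rule {NT TM Φ : Type} (r : ParamRule NT TM Φ) (ρ : List Φ)
    (hhull : InHull r.f (r.rhs.length + 1) ρ) :
    ∃ q : IndRule NT TM Φ, InducedBy r q ∧ q.fail = false ∧
      q.rhs.length = r.rhs.length ∧
      ρ[0]? = some q.inP ∧ ρ[2*r.rhs.length+1]? = some q.outP ∧
      ParamsMatch q r.rhs.length ρ := by
  set n := r.rhs.length with hn
  obtain ⟨hlen, hdef⟩ := hhull
  have h0 : (0:ℕ) < ρ.length := by omega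
  have hout : 2*n+1 < ρ.length := by omega
  refine ⟨⟨false, r.lhs, ρ.get ⟨0, h0⟩, ρ.get ⟨2*n+1, hout⟩,
    List.ofFn (fun i : Fin n => (r.rhs.get ⟨i, i.2⟩,
      ρ.get ⟨2*i+1, by have := i.2; omega⟩, ρ.get ⟨2*i+2, by have := i.2; omega⟩)),
    false⟩, ?_, rfl, by simp, List.getElem?_eq_getElem h0, List.getElem?_eq_getElem hout, ?_⟩
  · refine ⟨rfl, rfl, Or.inl ⟨rfl, by simp [hn], ρ, ⟨hlen, hdef⟩,
      List.getElem?_eq_getElem h0, List.getElem?_eq_getElem hout, ?_⟩⟩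
    intro i hi
    refine ⟨r.rhs.get ⟨i, hi⟩, ρ.get ⟨2*i+1, by omega⟩, ρ.get ⟨2*i+2, by omega⟩,
      List.getElem?_eq_getElem hi, List.getElem?_eq_getElem _, List.getElem?_eq_getElem _, ?_⟩
    simp [hi]
    omega
  · refine ⟨by omega, List.getElem?_eq_getElem h0, ?_, Or.inr ⟨by simp, rfl, List.getElem?_eq_getElem hout⟩⟩
    intro i hi
    refine ⟨r.rhs.get ⟨i, hi⟩, ρ.get ⟨2*i+1, by omega⟩, ρ.get ⟨2*i+2, by omega⟩,
      ?_, List.getElem?_eq_getElem _, List.getElem?_eq_getElem _⟩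
    simp [hi]

private lemma entries_agree {NT TM Φ : Type} {q : IndRule NT TM Φ} {d : ℕ}
    {ρ ρ2 : List Φ}
    (hpm : ParamsMatch q d ρ) (hd : d < q.rhs.length)
    (hin : ρ2[0]? = some q.inP)
    (hent : ∀ i ≤ d, ∃ X a b, q.rhs[i]? = some (X,a,b) ∧
        ρ2[2*i+1]? = some a ∧ ρ2[2*i+2]? = some b) :
    ∀ n < 2*d+2, ρ[n]? = ρ2[n]? := by
  apply get?_eq_of_entries
  · rw [hpm.2.1, hin]
  · intro i hi
    obtain ⟨X, a, b, hq, ha2, hb2⟩ := hent i hi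
    rcases Nat.lt_or_ge i d with hi' | hi'
    · obtain ⟨X', a', b', hq', ha', _⟩ := hpm.2.2.1 i hi'
      rw [hq] at hq'
      simp only [Option.some.injEq, Prod.mk.injEq] at hq'
      rw [ha', ha2, hq'.2.1]
    · have : i = d := by omega
      subst this
      rcases hpm.2.2.2 with ⟨X', a', b', hq', ha'⟩ | ⟨h1, _, _⟩
      · rw [hq] at hq'
        simp only [Option.some.injEq, Prod.mk.injEq] at hq'
        rw [ha', ha2, hq'.2.1]
      · omega
  · intro i hi
    obtain ⟨X, a, b, hq, _, hb2⟩ := hent i (by omega)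
    obtain ⟨X', a', b', hq', _, hb'⟩ := hpm.2.2.1 i hi
    rw [hq] at hq'
    simp only [Option.some.injEq, Prod.mk.injEq] at hq'
    rw [hb', hb2, hq'.2.2]

private lemma f_defined {Φ : Type} {f : ℕ → List Φ → Option Φ} {u d : ℕ} {ρ ρ2 : List Φ}
    (hhull : InHull f u ρ2) (hdu : d + 1 < u)
    (hag : ∀ n < 2*d+2, ρ[n]? = ρ2[n]?)
    (hρ : ρ.length = 2*(d+1)) {β : Φ} (hβ : ρ2[2*d+2]? = some β) :
    ∃ b, f (d+1) (ρ ++ [β]) = some b ∧ ρ2[2*d+3]? = some b := by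
  obtain ⟨hl, hdef⟩ := hhull
  have h3 : 2*d+3 < ρ2.length := by omega
  refine ⟨ρ2.get ⟨_, h3⟩, ?_, List.getElem?_eq_getElem h3⟩
  have hdf := hdef (d+1) hdu
  have hx : 2*(d+1)+1 = 2*d+3 := by ring
  rw [hx] at hdf
  have htake : ρ2.take (2*d+3) = ρ ++ [β] := by
    apply take_eq_of_get? _ _ _ (by simp [hρ]; omega)
    intro n hn
    rcases Nat.lt_or_ge n (2*d+2) with hn' | hn'
    · rw [get?_app1 _ _ (by omega), hag n hn']
    · have h2 : n = 2*d+2 := by omega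
      subst h2
      have h4 : 2*d+2 = ρ.length := by omega
      rw [hβ, h4, get?_app2]
  rw [← htake, ← hdf, List.getElem?_eq_getElem h3]
  simp

private lemma paramsMatch_extend {NT TM Φ : Type} {q : IndRule NT TM Φ} {d : ℕ}
    {ρ : List Φ} (hpm : ParamsMatch q d ρ) (hd : d < q.rhs.length)
    {X : NT ⊕ TM} {α β b : Φ}
    (hdot : q.rhs[d]? = some (X, α, β))
    (hlast : (∃ X2 a2 b2, q.rhs[d+1]? = some (X2, a2, b2) ∧ a2 = b) ∨
      (d + 1 = q.rhs.length ∧ q.fail = false ∧ b = q.outP)) :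
    ParamsMatch q (d+1) (ρ ++ [β] ++ [b]) := by
  obtain ⟨hρlen, hin, hall, hlastd⟩ := hpm
  have happ : ∀ n < 2*d+2, (ρ ++ [β] ++ [b])[n]? = ρ[n]? := by
    intro n hn
    rw [get?_app1 _ _ (by simp [hρlen]; omega), get?_app1 _ _ (by omega)]
  have hb : (ρ ++ [β] ++ [b])[2*(d+1)+1]? = some b := by
    have h1 : 2*(d+1)+1 = (ρ ++ [β]).length := by simp [hρlen]
    rw [h1, get?_app2]
  refine ⟨by simp [hρlen]; omega, by rw [happ 0 (by omega)]; exact hin, ?_, ?_⟩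
  · intro i hi
    rcases Nat.lt_or_ge i d with hi' | hi'
    · obtain ⟨X', a', b', h1, h2, h3⟩ := hall i hi'
      exact ⟨X', a', b', h1, by rw [happ _ (by omega)]; exact h2,
        by rw [happ _ (by omega)]; exact h3⟩
    · have hid : i = d := by omega
      subst hid
      have hα : ρ[2*i+1]? = some α := by
        rcases hlastd with ⟨X', a', b', h1, h2⟩ | ⟨h1, _, _⟩
        · rw [hdot] at h1
          simp only [Option.some.injEq, Prod.mk.injEq] at h1
          rw [h2, h1.2.1]
        · omega
      refine ⟨X, α, β, hdot, by rw [happ _ (by omega)]; exact hα, ?_⟩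
      rw [get?_app1 _ _ (by simp [hρlen]; omega)]
      have h2 : 2*i+2 = ρ.length := by omega
      rw [h2, get?_app2]
  · rcases hlast with ⟨X2, a2, b2, h1, rfl⟩ | ⟨h1, h2, rfl⟩
    · exact Or.inl ⟨X2, a2, b2, h1, hb⟩
    · exact Or.inr ⟨h1, h2, hb⟩

private lemma step_params {NT TM Φ : Type} {r : ParamRule NT TM Φ} {q : IndRule NT TM Φ}
    (hind : InducedBy r q) {d : ℕ} {ρ : List Φ}
    (hpm : ParamsMatch q d ρ) {X : NT ⊕ TM} {α β : Φ}
    (hdot : q.rhs[d]? = some (X, α, β))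
    (hnf : ¬(q.fail = true ∧ d + 1 = q.rhs.length)) :
    ∃ b, r.f (d+1) (ρ ++ [β]) = some b ∧ ParamsMatch q (d+1) (ρ ++ [β] ++ [b]) := by
  have hd : d < q.rhs.length := lt_of_get?_some hdot
  have hρlen : ρ.length = 2*(d+1) := hpm.1
  rcases hind.2.2 with ⟨hf0, hlenq, ρ2, hhull, hin, hout, hent⟩ |
    ⟨hf1, hh, hh1, hhr, hqlen, ρ2, hhull, hin, hent, X1, a1, βh, hrh, hρh, hqh, hfnone⟩
  · -- fail = false
    have hag : ∀ m < 2*d+2, ρ[m]? = ρ2[m]? :=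
      entries_agree hpm hd hin (fun i hi => by
        obtain ⟨X', a', b', _, h1, h2, h3⟩ := hent i (by omega)
        exact ⟨X', a', b', h3, h1, h2⟩)
    have hβ2 : ρ2[2*d+2]? = some β := by
      obtain ⟨X', a', b', _, _, hb', hq'⟩ := hent d (by omega)
      rw [hdot] at hq'
      simp only [Option.some.injEq, Prod.mk.injEq] at hq'
      rw [hb', hq'.2.2]
    obtain ⟨b, hfb, hb2⟩ := f_defined hhull (by omega) hag hρlen hβ2
    refine ⟨b, hfb, paramsMatch_extend ⟨hρlen, hpm.2.1, hpm.2.2.1, hpm.2.2.2⟩ hd hdot ?_⟩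
    rcases Nat.lt_or_ge (d+1) r.rhs.length with h1 | h1
    · obtain ⟨X2, a2, b2, _, ha2, _, hq2⟩ := hent (d+1) h1
      have hx : 2*(d+1)+1 = 2*d+3 := by ring
      rw [hx, hb2] at ha2
      exact Or.inl ⟨X2, a2, b2, hq2, by injection ha2 with h; exact h.symm⟩
    · have h2 : d + 1 = r.rhs.length := by omega
      refine Or.inr ⟨by omega, hf0, ?_⟩
      have hx : 2*r.rhs.length+1 = 2*d+3 := by omega
      rw [hx, hb2] at hout
      injection hout
  · -- fail = true
    have hdh : d + 1 < hh := by
      rcases Nat.lt_or_ge (d+1) hh with h | h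
      · exact h
      · exact absurd ⟨hf1, by omega⟩ hnf
    have hag : ∀ m < 2*d+2, ρ[m]? = ρ2[m]? :=
      entries_agree hpm hd hin (fun i hi => by
        obtain ⟨X', a', b', _, h1, h2, h3⟩ := hent i (by omega)
        exact ⟨X', a', b', h3, h1, h2⟩)
    have hβ2 : ρ2[2*d+2]? = some β := by
      obtain ⟨X', a', b', _, _, hb', hq'⟩ := hent d (by omega)
      rw [hdot] at hq'
      simp only [Option.some.injEq, Prod.mk.injEq] at hq'
      rw [hb', hq'.2.2]
    obtain ⟨b, hfb, hb2⟩ := f_defined hhull hdh hag hρlen hβ2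
    refine ⟨b, hfb, paramsMatch_extend ⟨hρlen, hpm.2.1, hpm.2.2.1, hpm.2.2.2⟩ hd hdot ?_⟩
    rcases Nat.lt_or_ge (d+2) hh with h1 | h1
    · obtain ⟨X2, a2, b2, _, ha2, _, hq2⟩ := hent (d+1) h1
      have hx : 2*(d+1)+1 = 2*d+3 := by ring
      rw [hx, hb2] at ha2
      exact Or.inl ⟨X2, a2, b2, hq2, by injection ha2 with h; exact h.symm⟩
    · have h2 : d + 1 = hh - 1 := by omega
      have hx : 2*hh-1 = 2*d+3 := by omega
      rw [hx, hb2] at hρh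
      refine Or.inl ⟨X1, a1, βh, by rw [← h2] at hqh; exact hqh,
        by injection hρh with h; exact h.symm⟩

/-- If `I ∼ I'` then `Complete k I ∼ Complete' k I'`. -/
theorem complete_simulation {NT TM Φ : Type}
    (k : ℕ) (I : Set (PItem NT TM Φ)) (I' : Set (EItem NT TM Φ))
    (hI : ∀ x ∈ I, x.Valid) (hsim : Sim I I') :
    Sim (Complete k I) (Complete' k I') := by
  unfold Sim at hsim ⊢
  ext z'
  constructor
  · rintro ⟨z, hz, hmem⟩
    rcases hz with hz | ⟨x, hx, y, hy, M, hdot, hlhs, hyd, hyi, hyj, hio, ξout, b, hξ, hf, rfl⟩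
    · have h1 : z' ∈ NormItems I' := by rw [← hsim]; exact ⟨z, hz, hmem⟩
      exact ⟨Or.inl h1.1, h1.2⟩
    · obtain ⟨q, zd, zi, zj⟩ := z'
      obtain ⟨hind, hd', hi', hj', hfail, hpm⟩ := hmem
      have hd'' : zd = x.d + 1 := hd'
      have hi'' : zi = x.i := hi'
      have hj'' : zj = k := hj'
      subst hd'' hi'' hj''
      have hρlen : x.ρ.length = 2*(x.d+1) := (hI x hx).2.1
      have hpm0 : ParamsMatch q x.d x.ρ := paramsMatch_prefix hρlen hpm
      obtain ⟨Xd, a, bd, hq, ha, hb⟩ := hpm.2.2.1 x.d (Nat.lt_succ_self x.d)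
      have ha' : x.ρ[2*x.d+1]? = some a := by
        rw [← ha, get?_app1 _ _ (by
          simp only [List.length_append, List.length_singleton, hρlen]; omega),
          get?_app1 _ _ (by omega)]
      have hbd : bd = ξout := by
        have h2 : (x.ρ ++ [ξout] ++ [b])[2*x.d+2]? = some ξout := by
          rw [get?_app1 _ _ (by
            simp only [List.length_append, List.length_singleton, hρlen]; omega)]
          have h3 : 2*x.d+2 = x.ρ.length := by omega
          rw [h3, get?_app2]
        rw [h2] at hb; injection hb with h; exact h.symm
      have hX : Xd = Sum.inl M := by
        have h2 := induced_rhs_sym hind hq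
        rw [hdot] at h2; injection h2 with h; exact h.symm
      have hy'm : MemInduced x ⟨q, x.d, x.i, x.j⟩ := by
        refine ⟨hind, rfl, rfl, rfl, fun hf1 => ?_, hpm0⟩
        have h5 : x.d + 2 ≤ q.rhs.length := hfail hf1
        show x.d + 1 ≤ q.rhs.length
        omega
      have hy'I : (⟨q, x.d, x.i, x.j⟩ : EItem NT TM Φ) ∈ I' := by
        have h2 : (⟨q, x.d, x.i, x.j⟩ : EItem NT TM Φ) ∈ NormItems I' := by
          rw [← hsim]; exact ⟨x, hx, hy'm⟩
        exact h2.1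
      obtain ⟨qc, hqcind, hqcf, hqclen, hqcin, hqcout, hqcpm⟩ :=
        complete_rule y.r y.ρ (by rw [← hyd]; exact (hI y hy).2)
      have hcm : MemInduced y ⟨qc, y.d, y.i, y.j⟩ := by
        refine ⟨hqcind, rfl, rfl, rfl, fun h => ?_, by rw [hyd]; exact hqcpm⟩
        rw [hqcf] at h; cases h
      have hcI : (⟨qc, y.d, y.i, y.j⟩ : EItem NT TM Φ) ∈ I' := by
        have h2 : (⟨qc, y.d, y.i, y.j⟩ : EItem NT TM Φ) ∈ NormItems I' := by
          rw [← hsim]; exact ⟨y, hy, hcm⟩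
        exact h2.1
      have hinP : qc.inP = a := by
        rw [← hio, ha'] at hqcin; injection hqcin with h; exact h.symm
      have houtP : qc.outP = ξout := by
        rw [← hyd, hξ] at hqcout; injection hqcout with h; exact h.symm
      refine ⟨?_, hind.1, ?_⟩
      · refine Or.inr ⟨⟨q, x.d, x.i, x.j⟩, hy'I, ⟨qc, y.d, y.i, y.j⟩, hcI, M, a, ξout,
          ?_, hqcind.1, hqcf, ?_, hinP, houtP, by simp [hqclen, hyd], by simp [hyi],
          by simp [hyj], ?_⟩
        · rw [hX, hbd] at hq; exact hq
        · rw [hqcind.2.1, hlhs]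
        · rfl
      · rintro ⟨hf1, he⟩
        have h5 : x.d + 2 ≤ q.rhs.length := hfail hf1
        have h6 : x.d + 1 = q.rhs.length := he
        omega
  · rintro ⟨hz, htop, hnf⟩
    rcases hz with hz | ⟨y', hy', c, hc, M, α, β, hdot, hctop, hcf, hclhs, hcin, hcout,
      hcd, hci, hcj, rfl⟩
    · have h1 : z' ∈ InducedSet I := by rw [hsim]; exact ⟨hz, htop, hnf⟩
      obtain ⟨x, hx, hm⟩ := h1
      exact ⟨x, Or.inl hx, hm⟩
    · simp only at htop hnf
      have hy'n : y' ∈ InducedSet I := by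
        rw [hsim]
        refine ⟨hy', ?_, ?_⟩
        · exact htop
        · rintro ⟨h1, h2⟩
          have := lt_of_get?_some hdot; omega
      obtain ⟨x, hx, hind, hxd, hxi, hxj, hxfail, hxpm⟩ := hy'n
      have hcn : c ∈ InducedSet I := by
        rw [hsim]
        refine ⟨hc, hctop, ?_⟩
        rintro ⟨h1, _⟩
        rw [hcf] at h1; cases h1
      obtain ⟨y, hy, hindc, hyd, hyi, hyj, _, hypm⟩ := hcn
      have hydlen : y.d = y.r.rhs.length := by
        rcases hindc.2.2 with ⟨_, hlen, _⟩ | ⟨hft, _⟩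
        · omega
        · rw [hcf] at hft; cases hft
      have hdotx : y'.rule.rhs[x.d]? = some (Sum.inl M, α, β) := by
        rw [← hxd]; exact hdot
      have hrdot : x.r.rhs[x.d]? = some (Sum.inl M) := induced_rhs_sym hind hdotx
      have hdlt : x.d < y'.rule.rhs.length := lt_of_get?_some hdotx
      have hαx : x.ρ[2*x.d+1]? = some α := by
        rcases hxpm.2.2.2 with ⟨X', a', b', hq', ha'⟩ | ⟨h1, _, _⟩
        · rw [hdotx] at hq'
          simp only [Option.some.injEq, Prod.mk.injEq] at hq'
          rw [ha', hq'.2.1]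
        · omega
      have hy0 : y.ρ[0]? = some α := by rw [hypm.2.1, hcin]
      have hyout : y.ρ[2*y.d+1]? = some β := by
        rcases hypm.2.2.2 with ⟨X', a', b', hq', _⟩ | ⟨_, _, hout⟩
        · exfalso
          have := lt_of_get?_some hq'
          rcases hindc.2.2 with ⟨_, hlen, _⟩ | ⟨hft, _⟩
          · omega
          · rw [hcf] at hft; cases hft
        · rw [hout, hcout]
      have hnf' : ¬(y'.rule.fail = true ∧ x.d + 1 = y'.rule.rhs.length) := by
        rintro ⟨h1, h2⟩
        exact hnf ⟨h1, by omega⟩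
      obtain ⟨b, hfb, hpm'⟩ := step_params hind hxpm hdotx hnf'
      refine ⟨⟨x.r, x.d+1, x.i, k, x.ρ ++ [β] ++ [b]⟩,
        Or.inr ⟨x, hx, y, hy, M, hrdot, by rw [← hindc.2.1, hclhs], hydlen,
          by rw [← hyi, hci, hxj], by rw [← hyj, hcj], by rw [hαx, hy0], β, b, hyout, hfb, rfl⟩,
        ?_⟩
      refine ⟨hind, by simp [hxd], by simp [hxi], rfl, ?_, hpm'⟩
      intro hf1
      have h2 : ¬(x.d + 1 = y'.rule.rhs.length) := fun h => hnf' ⟨hf1, h⟩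
      show x.d + 2 ≤ y'.rule.rhs.length
      omega
end

section
/- Init ∼ Predict' 0 Init', i.e., the induced item set of PELLA's initial parameterized item set equals the normalized result of applying ELLA's prediction at position 0 to its initial item set on the induced grammar. Concretely, Norm(Predict' 0 Init') = { (S^{φ_start}_β → • w, 0, 0) | (S^{φ_start}_β → w) ∈ ⟦R⟧ } and this set equals ⟦Init⟧. -/
/-- Standard Earley prediction at position `k` on the induced grammar of `R`. -/
def Predict' {NT TM Φ : Type} (R : Set (ParamRule NT TM Φ)) (k : ℕ)
    (I' : Set (EItem NT TM Φ)) : Set (EItem NT TM Φ) :=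
  I' ∪ { y | ∃ y₀ ∈ I', y₀.j = k ∧ ∃ (M : NT) (α β : Φ),
      y₀.rule.rhs[y₀.d]? = some (Sum.inl M, α, β) ∧
      (∃ r ∈ R, InducedBy r y.rule) ∧ y.rule.lhs = M ∧ y.rule.inP = α ∧
      y.rule.outP = β ∧ y.d = 0 ∧ y.i = k ∧ y.j = k }

/-- PELLA's initial item set. -/
def Init {NT TM Φ : Type} (R : Set (ParamRule NT TM Φ)) (S : NT) (φs : Φ) :
    Set (PItem NT TM Φ) :=
  { z | z.r ∈ R ∧ z.r.lhs = S ∧ z.d = 0 ∧ z.i = 0 ∧ z.j = 0 ∧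
    ∃ β : Φ, z.r.f 0 [φs] = some β ∧ z.ρ = [φs, β] }

/-- The induced grammar's start rule `⊤ → S^{φs}_β`. -/
def TopRule {NT TM Φ : Type} (S : NT) (φs β : Φ) : IndRule NT TM Φ :=
  ⟨true, S, φs, β, [(Sum.inl S, φs, β)], false⟩

/-- ELLA's initial item set on the induced grammar. -/
def Init' {NT TM Φ : Type} (S : NT) (φs : Φ) : Set (EItem NT TM Φ) :=
  { y | ∃ β : Φ, y.rule = TopRule S φs β ∧ y.d = 0 ∧ y.i = 0 ∧ y.j = 0 }

lemma take_one_of_get0 {Φ : Type} {ρ : List Φ} {a : Φ} (h : ρ[0]? = some a) :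
    ρ.take 1 = [a] := by
  cases ρ with
  | nil => simp at h
  | cons x t => simp_all

lemma induced_fail_pos {NT TM Φ : Type} {r : ParamRule NT TM Φ} {q : IndRule NT TM Φ}
    (hind : InducedBy r q) (hf : q.fail = true) : 1 ≤ q.rhs.length := by
  rcases hind.2.2 with ⟨hf0, _⟩ | ⟨_, h, h1, _, hlen, _⟩
  · simp [hf0] at hf
  · omega

/-- Lemma A: characterization of `Norm(Predict' 0 Init')`. -/
lemma normPredict_eq {NT TM Φ : Type}
    (R : Set (ParamRule NT TM Φ)) (S : NT) (φs : Φ) :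
    NormItems (Predict' R 0 (Init' (TM := TM) S φs)) =
      { y : EItem NT TM Φ | ∃ q : IndRule NT TM Φ, (∃ r ∈ R, InducedBy r q) ∧
          q.lhs = S ∧ q.inP = φs ∧ y = ⟨q, 0, 0, 0⟩ } := by
  ext y
  constructor
  · rintro ⟨hmem, htop, hnot⟩
    rcases hmem with hinit | ⟨y₀, hy₀, hj, M, α, β, hget, ⟨r, hr, hind⟩, hlhs, hinP, houtP, hd, hi, hj'⟩
    · rcases hinit with ⟨β, hrule, _⟩
      rw [hrule] at htop
      simp [TopRule] at htop
    · rcases hy₀ with ⟨β₀, hrule₀, hd₀, _, _⟩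
      rw [hrule₀, hd₀] at hget
      simp [TopRule] at hget
      obtain ⟨hM, hα, hβ⟩ := hget
      refine ⟨y.rule, ⟨r, hr, hind⟩, ?_, ?_, ?_⟩
      · rw [hlhs, hM]
      · rw [hinP, hα]
      · cases y; simp_all
  · rintro ⟨q, ⟨r, hr, hind⟩, hlhs, hinP, hy⟩
    subst hy
    refine ⟨Or.inr ⟨⟨TopRule S φs q.outP, 0, 0, 0⟩, ⟨q.outP, rfl, rfl, rfl, rfl⟩, rfl,
      S, φs, q.outP, by simp [TopRule], ⟨r, hr, hind⟩, hlhs, hinP, rfl, rfl, rfl, rfl⟩,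
      hind.1, ?_⟩
    rintro ⟨hf, hlen0⟩
    have := induced_fail_pos hind hf
    simp at hlen0
    omega

/-- Lemma B: `⟦Init⟧` equals the same set. -/
lemma inducedInit_eq {NT TM Φ : Type}
    (R : Set (ParamRule NT TM Φ)) (S : NT) (φs : Φ) :
    InducedSet (Init R S φs) =
      { y : EItem NT TM Φ | ∃ q : IndRule NT TM Φ, (∃ r ∈ R, InducedBy r q) ∧
          q.lhs = S ∧ q.inP = φs ∧ y = ⟨q, 0, 0, 0⟩ } := by
  ext y
  constructor
  · rintro ⟨x, ⟨hR, hlhs, hd, hi, hj, β, hfβ, hρ⟩, hind, hyd, hyi, hyj, _, hpm⟩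
    refine ⟨y.rule, ⟨x.r, hR, hind⟩, ?_, ?_, ?_⟩
    · rw [hind.2.1, hlhs]
    · have h0 := hpm.2.1
      rw [hρ] at h0
      simp at h0
      exact h0.symm
    · cases y; simp_all
  · rintro ⟨q, ⟨r, hr, hind⟩, hlhs, hinP, hy⟩
    subst hy
    -- find β with r.f 0 [φs] = some β and q.rhs[0]? info (or outP)
    rcases hind.2.2 with ⟨hf0, hlenq, ρ', ⟨hlρ, hhull⟩, hρ0, hρlast, hall⟩ |
        ⟨hf1, h, h1, hh, hlenq, ρ', ⟨hlρ, hhull⟩, hρ0, hall, X, a, βh, _, hρa, hq0, _⟩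
    · -- fail = false
      have htake : ρ'.take 1 = [φs] := take_one_of_get0 (by rw [hρ0, hinP])
      have h01 : ρ'[1]? = r.f 0 [φs] := by
        have := hhull 0 (by omega)
        simpa [htake] using this
      rcases hq : r.rhs.length with _ | n
      · -- empty rhs : second disjunct of ParamsMatch
        have hρlast' : ρ'[1]? = some q.outP := by
          rw [← hρlast]; congr 1; omega
        refine ⟨⟨r, 0, 0, 0, [φs, q.outP]⟩,
          ⟨hr, hind.2.1 ▸ hlhs, rfl, rfl, rfl, q.outP, by rw [← h01, hρlast'], rfl⟩,
          hind, rfl, rfl, rfl, by simp [hf0], ?_⟩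
        refine ⟨by simp, by simp [hinP], by intro i hi; simp at hi, Or.inr ⟨by simp [← hq, hlenq], hf0, by simp⟩⟩
      · -- nonempty rhs : first disjunct
        obtain ⟨X, a, b, hrX, hρ1, hρ2, hqX⟩ := hall 0 (by omega)
        refine ⟨⟨r, 0, 0, 0, [φs, a]⟩,
          ⟨hr, hind.2.1 ▸ hlhs, rfl, rfl, rfl, a, by rw [← h01, hρ1], rfl⟩,
          hind, rfl, rfl, rfl, by simp [hf0], ?_⟩
        refine ⟨by simp, by simp [hinP], by intro i hi; simp at hi,
          Or.inl ⟨X, a, b, by simpa using hqX, by simp⟩⟩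
    · -- fail = true
      have htake : ρ'.take 1 = [φs] := take_one_of_get0 (by rw [hρ0, hinP])
      have h01 : ρ'[1]? = r.f 0 [φs] := by
        have := hhull 0 (by omega)
        simpa [htake] using this
      -- get the first entry of q.rhs and the witness a with ρ'[1]? = some a
      have hfirst : ∃ X a b, q.rhs[0]? = some (X, a, b) ∧ ρ'[1]? = some a := by
        rcases Nat.lt_or_ge 1 h with hlt | hge
        · obtain ⟨X, a, b, _, hρ1, _, hqX⟩ := hall 0 (by omega)
          exact ⟨X, a, b, hqX, hρ1⟩
        · have hh1 : h = 1 := by omega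
          subst hh1
          exact ⟨X, a, βh, by simpa using hq0, by simpa using hρa⟩
      obtain ⟨X, a, b, hq0', hρ1⟩ := hfirst
      refine ⟨⟨r, 0, 0, 0, [φs, a]⟩,
        ⟨hr, hind.2.1 ▸ hlhs, rfl, rfl, rfl, a, by rw [← h01, hρ1], rfl⟩,
        hind, rfl, rfl, rfl, fun _ => by show 0 + 1 ≤ q.rhs.length; omega, ?_⟩
      refine ⟨by simp, by simp [hinP], by intro i hi; simp at hi,
        Or.inl ⟨X, a, b, hq0', by simp⟩⟩

/-- `Init ∼ Predict' 0 Init'`; concretely,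
`Norm(Predict' 0 Init') = {(S^{φs}_β → • w, 0, 0) | (S^{φs}_β → w) ∈ ⟦R⟧}`
and this set equals `⟦Init⟧`. -/
theorem init_simulation {NT TM Φ : Type}
    (R : Set (ParamRule NT TM Φ)) (S : NT) (φs : Φ) :
    NormItems (Predict' R 0 (Init' (TM := TM) S φs)) =
      { y : EItem NT TM Φ | ∃ q : IndRule NT TM Φ, (∃ r ∈ R, InducedBy r q) ∧
          q.lhs = S ∧ q.inP = φs ∧ y = ⟨q, 0, 0, 0⟩ } ∧
    InducedSet (Init R S φs) = NormItems (Predict' R 0 (Init' (TM := TM) S φs)) := by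
  refine ⟨normPredict_eq R S φs, ?_⟩
  rw [normPredict_eq R S φs, inducedInit_eq R S φs]
end
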